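/- Let D be a strongly connected digraph on n ≥ 4 vertices with no directed cycle of length 2 or 3 in which every vertex has out-degree at least 1 and in-degree at least 1. Then the number of arcs of D is at most C(n−1, 2) + 1. -/

import Mathlib

open scoped Classical

noncomputable section

/-- `D` has a directed cycle of length `ℓ`: `ℓ` distinct vertices cyclically joined by arcs. -/
def HasDicycle {V : Type*} (A : V → V → Prop) (ℓ : ℕ) : Prop :=
  ∃ c : ZMod ℓ → V, Function.Injective c ∧ ∀ i, A (c i) (c (i + 1))

/-- Strong connectivity: every vertex reachable from every vertex. -/
def Strong {V : Type*} (A : V → V → Prop) : Prop :=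
  ∀ u v : V, Relation.ReflTransGen A u v

def outDeg {V : Type*} [Fintype V] (A : V → V → Prop) (v : V) : ℕ :=
  (Finset.univ.filter fun u => A v u).card

def inDeg {V : Type*} [Fintype V] (A : V → V → Prop) (v : V) : ℕ :=
  (Finset.univ.filter fun u => A u v).card

def arcs {V : Type*} [Fintype V] (A : V → V → Prop) : ℕ :=
  (Finset.univ.filter fun p : V × V => A p.1 p.2).card

namespace Aux6

open Relation

variable {V : Type*}

/-- extract an indexed path from `ReflTransGen` -/
lemma rtg_path {r : V → V → Prop} {a b : V} (h : ReflTransGen r a b) :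
    ∃ (m : ℕ) (g : ℕ → V), g 0 = a ∧ g m = b ∧ ∀ i < m, r (g i) (g (i + 1)) := by
  induction h with
  | refl => exact ⟨0, fun _ => a, rfl, rfl, fun i hi => absurd hi (by omega)⟩
  | @tail s y hps hsy ih =>
      obtain ⟨m, g, hg0, hgm, harc⟩ := ih
      refine ⟨m + 1, fun i => if i = m + 1 then y else g i, by simp [hg0], by simp, ?_⟩
      intro i hi
      rcases Nat.lt_or_ge i m with h1 | h1
      · simpa [Nat.ne_of_lt (by omega : i < m+1), Nat.ne_of_lt (by omega : i+1 < m+1), Nat.ne_of_lt h1] using harc i h1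
      · have : i = m := by omega
        subst this
        simpa [Nat.ne_of_lt (by omega : i < i+1), hgm] using hsy

lemma rtg_swap {r : V → V → Prop} {a b : V} (h : ReflTransGen r a b) :
    ReflTransGen (fun x y => r y x) b a := by
  induction h with
  | refl => exact .refl
  | tail _ h2 ih => exact .head h2 ih

/-- the context : an abstract "cross-arc" relation together with a component relation -/
structure Ctx (V : Type*) where
  B : V → V → Prop
  Rc : V → V → Prop
  no2 : ∀ a b, B a b → B b a → False
  no3 : ∀ a b c, B a b → B b c → B c a → False
  rc_refl : ∀ a, Rc a a
  rc_symm : ∀ a b, Rc a b → Rc b a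
  rc_trans : ∀ a b c, Rc a b → Rc b c → Rc a c
  hbr : ∀ a b, B a b → ¬ Rc a b
  hadj : ∀ a b, a ≠ b → ¬ Rc a b → B a b ∨ B b a
  hstrong : ∀ a b, ¬ Rc a b → ReflTransGen B a b

lemma Ctx.irrefl (C : Ctx V) (a : V) : ¬ C.B a a := fun h => C.no2 a a h h

def Ctx.flip (C : Ctx V) : Ctx V where
  B := fun a b => C.B b a
  Rc := C.Rc
  no2 := fun a b h1 h2 => C.no2 b a h1 h2
  no3 := fun a b c h1 h2 h3 => C.no3 a c b h3 h2 h1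
  rc_refl := C.rc_refl
  rc_symm := C.rc_symm
  rc_trans := C.rc_trans
  hbr := fun a b h hr => C.hbr b a h (C.rc_symm _ _ hr)
  hadj := fun a b hne hr => by
    have := C.hadj b a (Ne.symm hne) (fun h => hr (C.rc_symm _ _ h))
    tauto
  hstrong := fun a b hr => rtg_swap (C.hstrong b a (fun h => hr (C.rc_symm _ _ h)))

theorem Ctx.core (C : Ctx V) (k : ℕ) (hk : 0 < k) (c : ℕ → V)
    (hper : ∀ n, c (n + k) = c n)
    (harc : ∀ n, C.B (c n) (c (n + 1)))
    (hclass : ∀ n, C.Rc (c n) (c 0) ∨ C.Rc (c n) (c 1))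
    (z : V) (hz0 : ¬ C.Rc z (c 0)) (hz1 : ¬ C.Rc z (c 1))
    (hzdom : ∀ n, C.B z (c n)) : False := by
  classical
  -- basic helpers
  have hnotc : ∀ v', ¬ C.Rc v' (c 0) → ¬ C.Rc v' (c 1) → ∀ n, ¬ C.Rc v' (c n) := by
    intro v' h0 h1 n hr
    rcases hclass n with h | h
    · exact h0 (C.rc_trans _ _ _ hr h)
    · exact h1 (C.rc_trans _ _ _ hr h)
  have hnec : ∀ v', (∀ n, ¬ C.Rc v' (c n)) → ∀ n, v' ≠ c n := by
    intro v' h n he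
    exact h n (by rw [he]; exact C.rc_refl _)
  have hpermul : ∀ j n, c (n + j * k) = c n := by
    intro j
    induction j with
    | zero => simp
    | succ j ih =>
        intro n
        have : n + (j + 1) * k = (n + j * k) + k := by ring
        rw [this, hper, ih]
  have hprop : ∀ v', (∀ n, ¬ C.Rc v' (c n)) → ∀ q₁, C.B v' (c q₁) → ∀ q, C.B v' (c q) := by
    intro v' hnr q₁ h1 q
    have hstep : ∀ q', C.B v' (c q') → C.B v' (c (q' + 1)) := by
      intro q' h
      rcases C.hadj v' (c (q' + 1)) (hnec v' hnr (q' + 1)) (hnr (q' + 1)) with h' | h'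
      · exact h'
      · exact absurd h' (fun hb => C.no3 v' (c q') (c (q' + 1)) h (harc q') hb)
    have hall : ∀ d, C.B v' (c (q₁ + d)) := by
      intro d
      induction d with
      | zero => simpa using h1
      | succ d ih => have := hstep (q₁ + d) ih; rwa [Nat.add_succ]
    have hle : q₁ ≤ q + q₁ * k := by
      have : q₁ ≤ q₁ * k := Nat.le_mul_of_pos_right _ hk
      omega
    have := hall (q + q₁ * k - q₁)
    rw [show q₁ + (q + q₁ * k - q₁) = q + q₁ * k by omega, hpermul] at this
    exact this
  -- minimal distance from the cycle to a dominating off-class vertex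
  set P : ℕ → Prop := fun m => ∃ (v : V) (g : ℕ → V),
      ((¬ C.Rc v (c 0) ∧ ¬ C.Rc v (c 1)) ∧ ∀ n, C.B v (c n)) ∧
      (∃ n₀, g 0 = c n₀) ∧ g m = v ∧ ∀ i < m, C.B (g i) (g (i + 1)) with hP
  have hex : ∃ m, P m := by
    have h0 : ¬ C.Rc (c 0) z := fun h => hz0 (C.rc_symm _ _ h)
    obtain ⟨m, g, hg0, hgm, ha⟩ := rtg_path (C.hstrong (c 0) z h0)
    exact ⟨m, z, g, ⟨⟨hz0, hz1⟩, hzdom⟩, ⟨0, hg0⟩, hgm, ha⟩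
  have hspec := Nat.find_spec hex
  have htmin : ∀ m, m < Nat.find hex → ¬ P m := fun m hm => Nat.find_min hex hm
  generalize htg : Nat.find hex = t at hspec htmin
  obtain ⟨v, w, ⟨⟨hv0, hv1⟩, hvdom⟩, ⟨n₀, hw0⟩, hwt, hwarc⟩ := hspec
  have ht1 : 1 ≤ t := by
    by_contra h
    have ht0 : t = 0 := by omega
    have : v = c n₀ := by rw [← hwt, ht0, hw0]
    exact hnotc v hv0 hv1 n₀ (by rw [this]; exact C.rc_refl _)
  have ht2 : 2 ≤ t := by
    by_contra h
    have ht01 : t = 1 := by omega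
    have a0 : C.B (c n₀) (w 1) := by have := hwarc 0 (by omega); rwa [hw0] at this
    rw [show (1 : ℕ) = t from ht01.symm, hwt] at a0
    exact C.no2 _ _ a0 (hvdom n₀)
  -- no path vertex equals a cycle vertex
  have m1 : ∀ i q, 1 ≤ i → i < t → w i ≠ c q := by
    intro i q h1 h2 he
    apply htmin (t - i) (by omega)
    refine ⟨v, fun j => w (i + j), ⟨⟨hv0, hv1⟩, hvdom⟩, ⟨q, by simpa using he⟩, ?_, ?_⟩
    · show w (i + (t - i)) = v
      have e : i + (t - i) = t := by omega
      rw [e, hwt]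
    · intro j hj
      show C.B (w (i + j)) (w (i + (j + 1)))
      have e : i + (j + 1) = (i + j) + 1 := by omega
      rw [e]
      exact hwarc (i + j) (by omega)
  -- no arc from the cycle into an intermediate path vertex (index ≥ 2)
  have m1b : ∀ i q, 2 ≤ i → i < t → ¬ C.B (c q) (w i) := by
    intro i q h2 h3 hB
    apply htmin (t - i + 1) (by omega)
    refine ⟨v, fun j => if j = 0 then c q else w (i + j - 1), ⟨⟨hv0, hv1⟩, hvdom⟩,
      ⟨q, by simp⟩, ?_, ?_⟩
    · show (if t - i + 1 = 0 then c q else w (i + (t - i + 1) - 1)) = v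
      rw [if_neg (by omega : ¬ (t - i + 1 = 0))]
      have e : i + (t - i + 1) - 1 = t := by omega
      rw [e, hwt]
    · intro j hj
      show C.B (if j = 0 then c q else w (i + j - 1))
        (if j + 1 = 0 then c q else w (i + (j + 1) - 1))
      rcases Nat.eq_zero_or_pos j with rfl | hj0
      · rw [if_pos rfl, if_neg (by omega : ¬ ((0:ℕ) + 1 = 0))]
        have e : i + (0 + 1) - 1 = i := by omega
        rw [e]; exact hB
      · rw [if_neg (by omega : ¬ (j = 0)), if_neg (by omega : ¬ (j + 1 = 0))]
        have e1 : i + (j + 1) - 1 = (i + j - 1) + 1 := by omega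
        rw [e1]
        exact hwarc (i + j - 1) (by omega)
  -- intermediate vertices (index ≥ 2) lie in one of the two cycle classes
  have m2 : ∀ i, 2 ≤ i → i < t → C.Rc (w i) (c 0) ∨ C.Rc (w i) (c 1) := by
    intro i h2 h3
    by_contra hc
    push_neg at hc
    obtain ⟨hc0, hc1⟩ := hc
    have hdom : ∀ q, C.B (w i) (c q) := by
      intro q
      rcases C.hadj (w i) (c q) (m1 i q (by omega) h3) (hnotc _ hc0 hc1 q) with h | h
      · exact h
      · exact absurd h (m1b i q h2 h3)
    exact htmin i h3 ⟨w i, w, ⟨⟨hc0, hc1⟩, hdom⟩, ⟨n₀, hw0⟩, rfl, fun j hj => hwarc j (by omega)⟩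
  have hvne : ∀ i, 2 ≤ i → i < t → ¬ C.Rc (w i) v := by
    intro i h2 h3 hr
    rcases m2 i h2 h3 with h | h
    · exact hv0 (C.rc_trans _ _ _ (C.rc_symm _ _ hr) h)
    · exact hv1 (C.rc_trans _ _ _ (C.rc_symm _ _ hr) h)
  have dchain : ∀ i, 2 ≤ i → i < t → C.B (w i) v := by
    have key : ∀ d i, i + d + 1 = t → 2 ≤ i → C.B (w i) v := by
      intro d
      induction d with
      | zero =>
          intro i hi h2
          have := hwarc i (by omega)
          rwa [show i + 1 = t by omega, hwt] at this
      | succ d ih =>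
          intro i hi h2
          have hnext : C.B (w (i + 1)) v := ih (i + 1) (by omega) (by omega)
          have hne := hvne i h2 (by omega)
          rcases C.hadj (w i) v (fun he => hne (by rw [he]; exact C.rc_refl _)) hne with h | h
          · exact h
          · exact (C.no3 v (w i) (w (i + 1)) h (hwarc i (by omega)) hnext).elim
    intro i h2 h3
    exact key (t - 1 - i) i (by omega) h2
  -- main case split
  rcases Nat.lt_or_ge t 3 with ht3 | ht3
  · -- t = 2
    have ht : t = 2 := by omega
    have a0 : C.B (c n₀) (w 1) := by have := hwarc 0 (by omega); rwa [hw0] at this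
    have a1 : C.B (w 1) v := by
      have := hwarc 1 (by omega)
      rwa [show (1 : ℕ) + 1 = t by omega, hwt] at this
    exact C.no3 (c n₀) (w 1) v a0 a1 (hvdom n₀)
  · by_cases hw1c : C.Rc (w 1) (c 0) ∨ C.Rc (w 1) (c 1)
    · have hne : ¬ C.Rc (w 1) v := by
        intro hr
        rcases hw1c with h | h
        · exact hv0 (C.rc_trans _ _ _ (C.rc_symm _ _ hr) h)
        · exact hv1 (C.rc_trans _ _ _ (C.rc_symm _ _ hr) h)
      have a0 : C.B (c n₀) (w 1) := by have := hwarc 0 (by omega); rwa [hw0] at this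
      rcases C.hadj (w 1) v (fun he => hne (by rw [he]; exact C.rc_refl _)) hne with h | h
      · exact C.no3 (c n₀) (w 1) v a0 h (hvdom n₀)
      · exact C.no3 v (w 1) (w 2) h (hwarc 1 (by omega)) (dchain 2 (le_refl 2) (by omega))
    · push_neg at hw1c
      obtain ⟨h10, h11⟩ := hw1c
      by_cases hdom1 : ∃ q, C.B (w 1) (c q)
      · obtain ⟨q₁, hq₁⟩ := hdom1
        have hall : ∀ q, C.B (w 1) (c q) := hprop (w 1) (hnotc _ h10 h11) q₁ hq₁
        exact htmin 1 (by omega)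
          ⟨w 1, w, ⟨⟨h10, h11⟩, hall⟩, ⟨n₀, hw0⟩, rfl, fun j hj => hwarc j (by omega)⟩
      · push_neg at hdom1
        have hdomd : ∀ q, C.B (c q) (w 1) := by
          intro q
          rcases C.hadj (w 1) (c q) (hnec _ (hnotc _ h10 h11) q) (hnotc _ h10 h11 q) with h | h
          · exact absurd h (hdom1 q)
          · exact h
        have hrc2 : ∀ q, C.Rc (w 2) (c q) := by
          intro q
          by_contra hr
          rcases C.hadj (w 2) (c q) (m1 2 q (by omega) (by omega)) hr with h | h
          · exact C.no3 (c q) (w 1) (w 2) (hdomd q) (hwarc 1 (by omega)) h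
          · exact m1b 2 q (by omega) (by omega) h
        exact C.hbr (c 0) (c 1) (harc 0)
          (C.rc_trans _ _ _ (C.rc_symm _ _ (hrc2 0)) (hrc2 1))

lemma Ctx.domprop (C : Ctx V) (k : ℕ) (hk : 0 < k) (c : ℕ → V)
    (hper : ∀ n, c (n + k) = c n) (harc : ∀ n, C.B (c n) (c (n + 1)))
    (v : V) (hnr : ∀ n, ¬ C.Rc v (c n)) (q₁ : ℕ) (h1 : C.B v (c q₁)) :
    ∀ q, C.B v (c q) := by
  have hnec : ∀ n, v ≠ c n := fun n he => hnr n (by rw [he]; exact C.rc_refl _)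
  have hpermul : ∀ j n, c (n + j * k) = c n := by
    intro j
    induction j with
    | zero => simp
    | succ j ih =>
        intro n
        have e : n + (j + 1) * k = (n + j * k) + k := by ring
        rw [e, hper, ih]
  have hstep : ∀ q', C.B v (c q') → C.B v (c (q' + 1)) := by
    intro q' h
    rcases C.hadj v (c (q' + 1)) (hnec (q' + 1)) (hnr (q' + 1)) with h' | h'
    · exact h'
    · exact absurd h' (fun hb => C.no3 v (c q') (c (q' + 1)) h (harc q') hb)
  have hall : ∀ d, C.B v (c (q₁ + d)) := by
    intro d
    induction d with
    | zero => simpa using h1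
    | succ d ih => have := hstep (q₁ + d) ih; rwa [Nat.add_succ]
  intro q
  have hle : q₁ ≤ q + q₁ * k := by
    have : q₁ ≤ q₁ * k := Nat.le_mul_of_pos_right _ hk
    omega
  have := hall (q + q₁ * k - q₁)
  rw [show q₁ + (q + q₁ * k - q₁) = q + q₁ * k by omega, hpermul] at this
  exact this

theorem Ctx.three_classes (C : Ctx V) (u v w : V)
    (huv : ¬ C.Rc u v) (hvw : ¬ C.Rc v w) (huw : ¬ C.Rc u w) : False := by
  classical
  -- a closed walk exists
  have hex : ∃ m, 1 ≤ m ∧ ∃ g : ℕ → V, g m = g 0 ∧ ∀ i < m, C.B (g i) (g (i + 1)) := by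
    obtain ⟨m₁, g₁, hg10, hg1m, ha1⟩ := rtg_path (C.hstrong u v huv)
    obtain ⟨m₂, g₂, hg20, hg2m, ha2⟩ :=
      rtg_path (C.hstrong v u (fun h => huv (C.rc_symm _ _ h)))
    have hune : u ≠ v := fun he => huv (by rw [he]; exact C.rc_refl _)
    have hm1 : 1 ≤ m₁ := by
      rcases Nat.eq_zero_or_pos m₁ with h | h
      · exact absurd (show u = v by rw [← hg10, ← hg1m, h]) hune
      · exact h
    have hm2 : 1 ≤ m₂ := by
      rcases Nat.eq_zero_or_pos m₂ with h | h
      · exact absurd (show v = u by rw [← hg20, ← hg2m, h]) (Ne.symm hune)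
      · exact h
    refine ⟨m₁ + m₂, by omega, fun i => if i ≤ m₁ then g₁ i else g₂ (i - m₁), ?_, ?_⟩
    · show (if m₁ + m₂ ≤ m₁ then g₁ (m₁ + m₂) else g₂ (m₁ + m₂ - m₁)) =
        (if 0 ≤ m₁ then g₁ 0 else g₂ (0 - m₁))
      rw [if_neg (by omega), if_pos (by omega), show m₁ + m₂ - m₁ = m₂ by omega,
        hg2m, hg10]
    · intro i hi
      show C.B (if i ≤ m₁ then g₁ i else g₂ (i - m₁))
        (if i + 1 ≤ m₁ then g₁ (i + 1) else g₂ (i + 1 - m₁))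
      rcases Nat.lt_or_ge i m₁ with h | h
      · rcases Nat.lt_or_ge (i + 1) m₁ with h' | h'
        · rw [if_pos (by omega), if_pos (by omega)]
          exact ha1 i h
        · have : i + 1 = m₁ := by omega
          rw [if_pos (by omega), if_pos (by omega)]
          exact ha1 i h
      · rcases Nat.eq_or_lt_of_le h with h' | h'
        · rw [if_pos (by omega), if_neg (by omega), show i + 1 - m₁ = 1 by omega,
            ← h', hg1m, ← hg20]
          exact ha2 0 (by omega)
        · rw [if_neg (by omega), if_neg (by omega)]
          have e : i + 1 - m₁ = (i - m₁) + 1 := by omega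
          rw [e]
          exact ha2 (i - m₁) (by omega)
  have hspec := Nat.find_spec hex
  have hkmin : ∀ m, m < Nat.find hex → ¬ (1 ≤ m ∧ ∃ g : ℕ → V, g m = g 0 ∧
      ∀ i < m, C.B (g i) (g (i + 1))) := fun m hm => Nat.find_min hex hm
  generalize htg : Nat.find hex = k at hspec hkmin
  obtain ⟨hk1, g, hgc, hga⟩ := hspec
  have hirr := C.irrefl
  -- k ≥ 4
  have hk4 : 4 ≤ k := by
    by_contra hcon
    have : k = 1 ∨ k = 2 ∨ k = 3 := by omega
    rcases this with h | h | h
    · subst h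
      exact hirr _ (by have := hga 0 (by omega); rwa [show (0:ℕ)+1 = 1 from rfl, hgc] at this)
    · subst h
      have a0 := hga 0 (by omega)
      have a1 := hga 1 (by omega)
      rw [show (1:ℕ)+1 = 2 from rfl, hgc] at a1
      exact C.no2 _ _ a0 a1
    · subst h
      have a0 := hga 0 (by omega)
      have a1 := hga 1 (by omega)
      have a2 := hga 2 (by omega)
      rw [show (2:ℕ)+1 = 3 from rfl, hgc] at a2
      exact C.no3 _ _ _ a0 a1 a2
  have hk : 0 < k := by omega
  -- windows injectivity
  have ginj : ∀ i j, i < j → j < k → g i ≠ g j := by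
    intro i j hij hjk he
    apply hkmin (j - i) (by omega)
    refine ⟨by omega, fun s => g (i + s), ?_, ?_⟩
    · show g (i + (j - i)) = g (i + 0)
      rw [show i + (j - i) = j by omega, show i + 0 = i by omega]
      exact he.symm
    · intro s hs
      show C.B (g (i + s)) (g (i + (s + 1)))
      rw [show i + (s + 1) = (i + s) + 1 by omega]
      exact hga (i + s) (by omega)
  -- the periodic cycle
  set c : ℕ → V := fun n => g (n % k) with hc
  have hper : ∀ n, c (n + k) = c n := by
    intro n
    show g ((n + k) % k) = g (n % k)
    rw [Nat.add_mod_right]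
  have hsuccmod : ∀ n, (n + 1) % k = (n % k + 1) % k := by
    intro n
    conv_lhs => rw [Nat.add_mod]
    rw [Nat.mod_eq_of_lt (show 1 < k by omega)]
  have harc : ∀ n, C.B (c n) (c (n + 1)) := by
    intro n
    show C.B (g (n % k)) (g ((n + 1) % k))
    rw [hsuccmod n]
    rcases Nat.lt_or_ge (n % k + 1) k with h | h
    · rw [Nat.mod_eq_of_lt h]
      exact hga (n % k) (by omega)
    · have hmod : n % k < k := Nat.mod_lt _ hk
      have e : n % k + 1 = k := by omega
      rw [e, Nat.mod_self]
      have h2 := hga (n % k) (by omega)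
      rw [e] at h2
      rwa [hgc] at h2
  -- no chords : distance-2 vertices are in the same class
  have chordRc : ∀ n, C.Rc (c n) (c (n + 2)) := by
    intro n
    have hne : c n ≠ c (n + 2) := by
      show g (n % k) ≠ g ((n + 2) % k)
      have hmodne : (n + 2) % k ≠ n % k := by
        intro he
        have hm : n % k = (n + 2) % k := he.symm
        have : k ∣ (n + 2) - n := (Nat.modEq_iff_dvd' (by omega)).mp hm
        rw [show n + 2 - n = 2 by omega] at this
        have := Nat.le_of_dvd (by omega) this
        omega
      rcases lt_trichotomy (n % k) ((n + 2) % k) with h | h | h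
      · exact ginj _ _ h (Nat.mod_lt _ hk)
      · exact absurd h.symm hmodne
      · exact (ginj _ _ h (Nat.mod_lt _ hk)).symm
    have hnb1 : ¬ C.B (c (n + 2)) (c n) := by
      intro hb
      have a1 := harc n
      have a2 := harc (n + 1)
      rw [show n + 1 + 1 = n + 2 by omega] at a2
      exact C.no3 _ _ _ a1 a2 hb
    have hnb2 : ¬ C.B (c n) (c (n + 2)) := by
      intro hb
      apply hkmin (k - 1) (by omega)
      refine ⟨by omega, fun s => if s = 0 then c n else c (n + 1 + s), ?_, ?_⟩
      · show (if k - 1 = 0 then c n else c (n + 1 + (k - 1))) =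
          (if (0:ℕ) = 0 then c n else c (n + 1 + 0))
        rw [if_neg (by omega), if_pos rfl, show n + 1 + (k - 1) = n + k by omega, hper]
      · intro s hs
        show C.B (if s = 0 then c n else c (n + 1 + s))
          (if s + 1 = 0 then c n else c (n + 1 + (s + 1)))
        rcases Nat.eq_zero_or_pos s with rfl | hs0
        · rw [if_pos rfl, if_neg (by omega)]
          rw [show n + 1 + (0 + 1) = n + 2 by omega]
          exact hb
        · rw [if_neg (by omega), if_neg (by omega)]
          rw [show n + 1 + (s + 1) = (n + 1 + s) + 1 by omega]
          exact harc (n + 1 + s)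
    by_contra hr
    rcases C.hadj (c n) (c (n + 2)) hne hr with h | h
    · exact hnb2 h
    · exact hnb1 h
  have doubleRc : ∀ n j, C.Rc (c n) (c (n + 2 * j)) := by
    intro n j
    induction j with
    | zero => simpa using C.rc_refl (c n)
    | succ j ih =>
        have := chordRc (n + 2 * j)
        rw [show n + 2 * j + 2 = n + 2 * (j + 1) by ring] at this
        exact C.rc_trans _ _ _ ih this
  have hclassfull : ∀ n, C.Rc (c n) (c (n % 2)) := by
    intro n
    have := doubleRc (n % 2) (n / 2)
    rw [show n % 2 + 2 * (n / 2) = n by omega] at this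
    exact C.rc_symm _ _ this
  have hclass : ∀ n, C.Rc (c n) (c 0) ∨ C.Rc (c n) (c 1) := by
    intro n
    rcases Nat.mod_two_eq_zero_or_one n with h | h
    · left; have := hclassfull n; rwa [h] at this
    · right; have := hclassfull n; rwa [h] at this
  -- one of u, v, w avoids both classes
  have pigeon : ∃ z : V, ¬ C.Rc z (c 0) ∧ ¬ C.Rc z (c 1) := by
    by_contra hcon
    have hz : ∀ z : V, C.Rc z (c 0) ∨ C.Rc z (c 1) := by
      intro z
      by_contra h
      push_neg at h
      exact hcon ⟨z, h⟩
    have ht2 : ∀ (b x y : V), C.Rc x b → C.Rc y b → C.Rc x y :=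
      fun b x y h1 h2 => C.rc_trans _ _ _ h1 (C.rc_symm _ _ h2)
    rcases hz u with h1 | h1 <;> rcases hz v with h2 | h2 <;> rcases hz w with h3 | h3
    · exact huv (ht2 _ _ _ h1 h2)
    · exact huv (ht2 _ _ _ h1 h2)
    · exact huw (ht2 _ _ _ h1 h3)
    · exact hvw (ht2 _ _ _ h2 h3)
    · exact hvw (ht2 _ _ _ h2 h3)
    · exact huw (ht2 _ _ _ h1 h3)
    · exact huv (ht2 _ _ _ h1 h2)
    · exact huv (ht2 _ _ _ h1 h2)
  obtain ⟨z, hz0, hz1⟩ := pigeon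
  have hznotc : ∀ n, ¬ C.Rc z (c n) := by
    intro n hr
    rcases hclass n with h | h
    · exact hz0 (C.rc_trans _ _ _ hr h)
    · exact hz1 (C.rc_trans _ _ _ hr h)
  have hznec : ∀ n, z ≠ c n := fun n he => hznotc n (by rw [he]; exact C.rc_refl _)
  by_cases hd : ∃ q, C.B z (c q)
  · obtain ⟨q₁, hq₁⟩ := hd
    exact C.core k hk c hper harc hclass z hz0 hz1 (C.domprop k hk c hper harc z hznotc q₁ hq₁)
  · push_neg at hd
    have hdomd : ∀ q, C.B (c q) z := by
      intro q
      rcases C.hadj z (c q) (hznec q) (hznotc q) with h | h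
      · exact absurd h (hd q)
      · exact h
    -- apply the core to the flipped context with the reversed cycle
    set c' : ℕ → V := fun n => c (2 * k - n % k) with hc'
    have he0 : c' 0 = c 0 := by
      show c (2 * k - 0 % k) = c 0
      rw [Nat.zero_mod, Nat.sub_zero, show 2 * k = 0 + k + k by ring, hper, hper]
    have he1 : C.Rc (c' 1) (c 1) := by
      show C.Rc (c (2 * k - 1 % k)) (c 1)
      rw [Nat.mod_eq_of_lt (show 1 < k by omega)]
      have := hclassfull (2 * k - 1)
      rwa [show (2 * k - 1) % 2 = 1 by omega] at this
    have hper' : ∀ n, c' (n + k) = c' n := by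
      intro n
      show c (2 * k - (n + k) % k) = c (2 * k - n % k)
      rw [Nat.add_mod_right]
    have he2k : c (2 * k) = c 0 := by
      rw [show 2 * k = 0 + k + k by ring, hper, hper]
    have hek1 : c (k + 1) = c 1 := by
      rw [show k + 1 = 1 + k by ring, hper]
    have harc' : ∀ n, C.B (c' (n + 1)) (c' n) := by
      intro n
      show C.B (c (2 * k - (n + 1) % k)) (c (2 * k - n % k))
      rw [hsuccmod n]
      have hmod : n % k < k := Nat.mod_lt _ hk
      rcases Nat.lt_or_ge (n % k + 1) k with h | h
      · rw [Nat.mod_eq_of_lt h]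
        have e1 : 2 * k - n % k = (2 * k - (n % k + 1)) + 1 := by omega
        rw [e1]
        exact harc _
      · have e : n % k + 1 = k := by omega
        rw [e, Nat.mod_self, Nat.sub_zero, he2k, show 2 * k - n % k = k + 1 by omega, hek1]
        exact harc 0
    have hclass' : ∀ n, C.Rc (c' n) (c' 0) ∨ C.Rc (c' n) (c' 1) := by
      intro n
      rcases hclass (2 * k - n % k) with h | h
      · left
        show C.Rc (c (2 * k - n % k)) (c' 0)
        rw [he0]
        exact h
      · right
        exact C.rc_trans _ _ _ h (C.rc_symm _ _ he1)
    have hz0' : ¬ C.Rc z (c' 0) := by rw [he0]; exact hz0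
    have hz1' : ¬ C.Rc z (c' 1) := fun h => hz1 (C.rc_trans _ _ _ h he1)
    exact (C.flip).core k hk c' hper' harc' hclass' z hz0' hz1' (fun n => hdomd _)

end Aux6

section DigraphSetup

variable {V : Type*} {A : V → V → Prop}

/-- non-adjacency of distinct vertices -/
def NRel (A : V → V → Prop) (u v : V) : Prop := u ≠ v ∧ ¬ A u v ∧ ¬ A v u

/-- same component of the non-adjacency graph -/
def RcA (A : V → V → Prop) : V → V → Prop := Relation.ReflTransGen (NRel A)

/-- arcs between different components -/
def BA (A : V → V → Prop) (u v : V) : Prop := A u v ∧ ¬ RcA A u v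

lemma RcA_symm {x y : V} (h : RcA A x y) : RcA A y x :=
  @Std.Symm.symm _ _ (@Relation.ReflTransGen.symmetric _ (NRel A)
    ⟨fun _ _ hr => ⟨hr.1.symm, hr.2.2, hr.2.1⟩⟩) _ _ h

lemma no2A (hirr : ∀ v, ¬ A v v) (h2 : ¬ HasDicycle A 2) :
    ∀ a b : V, A a b → A b a → False := by
  intro a b hab hba
  have hne : a ≠ b := fun he => hirr b (he ▸ hab)
  apply h2
  have h10 : (1 : ZMod 2) ≠ 0 := by decide
  have helts : ∀ i : ZMod 2, i = 0 ∨ i = 1 := by decide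
  refine ⟨fun i => if i = 0 then a else b, ?_, ?_⟩
  · intro i j hij
    rcases helts i with rfl | rfl <;> rcases helts j with rfl | rfl <;>
      simp only [if_pos rfl, if_neg h10] at hij <;> first | rfl | exact absurd hij hne |
        exact absurd hij.symm hne
  · intro i
    rcases helts i with rfl | rfl
    · simpa [h10] using hab
    · have h110 : (1 + 1 : ZMod 2) = 0 := by decide
      simpa [h10, h110] using hba

lemma no3A (hirr : ∀ v, ¬ A v v) (h2 : ¬ HasDicycle A 2) (h3 : ¬ HasDicycle A 3) :
    ∀ a b c : V, A a b → A b c → A c a → False := by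
  intro a b c hab hbc hca
  by_cases hac : a = c
  · exact no2A hirr h2 a b hab (hac ▸ hbc)
  have hne1 : a ≠ b := fun he => hirr b (he ▸ hab)
  have hne2 : b ≠ c := fun he => hirr c (he ▸ hbc)
  apply h3
  have e10 : (1 : ZMod 3) ≠ 0 := by decide
  have e20 : (2 : ZMod 3) ≠ 0 := by decide
  have e21 : (2 : ZMod 3) ≠ 1 := by decide
  have helts : ∀ i : ZMod 3, i = 0 ∨ i = 1 ∨ i = 2 := by decide
  refine ⟨fun i => if i = 0 then a else if i = 1 then b else c, ?_, ?_⟩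
  · intro i j hij
    rcases helts i with rfl | rfl | rfl <;> rcases helts j with rfl | rfl | rfl <;>
      simp only [if_pos rfl, if_neg e10, if_neg e20, if_neg e21] at hij <;>
        first
          | rfl
          | exact absurd hij hne1 | exact absurd hij.symm hne1
          | exact absurd hij hne2 | exact absurd hij.symm hne2
          | exact absurd hij hac | exact absurd hij.symm hac
  · intro i
    have e011 : (0 + 1 : ZMod 3) = 1 := by decide
    have e112 : (1 + 1 : ZMod 3) = 2 := by decide
    have e210 : (2 + 1 : ZMod 3) = 0 := by decide
    rcases helts i with rfl | rfl | rfl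
    · simpa [e011, e10] using hab
    · simpa [e112, e10, e20, e21] using hbc
    · simpa [e210, e10, e20, e21] using hca

lemma hadjA (x y : V) (hne : x ≠ y) (hr : ¬ RcA A x y) : A x y ∨ A y x := by
  by_contra hc
  push_neg at hc
  exact hr (Relation.ReflTransGen.single ⟨hne, hc.1, hc.2⟩)

/-- a path followed by a cross arc yields a cross path -/
lemma crossX (no2' : ∀ a b : V, A a b → A b a → False)
    (no3' : ∀ a b c : V, A a b → A b c → A c a → False)
    {p q' : V} (h : Relation.ReflTransGen A p q') :
    ∀ q, BA A q' q → Relation.ReflTransGen (BA A) p q := by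
  induction h with
  | refl => exact fun q hq => Relation.ReflTransGen.single hq
  | @tail s q' hps hsq' ih =>
      intro q hq
      by_cases hsq : s = q
      · exact ((no2' q' q hq.1 (hsq ▸ hsq')).elim)
      by_cases hrc : RcA A s q
      · have hnsq' : ¬ RcA A s q' := fun h' => hq.2 (Relation.ReflTransGen.trans (RcA_symm h') hrc)
        exact (ih q' ⟨hsq', hnsq'⟩).tail hq
      · rcases hadjA s q hsq hrc with h' | h'
        · exact ih q ⟨h', hrc⟩
        · exact (no3' s q' q hsq' hq.1 h').elim

/-- vertices in different components are joined by cross paths -/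
lemma crossReach (no2' : ∀ a b : V, A a b → A b a → False)
    (no3' : ∀ a b c : V, A a b → A b c → A c a → False)
    {x y : V} (h : Relation.ReflTransGen A x y) :
    ¬ RcA A x y → Relation.ReflTransGen (BA A) x y := by
  induction h with
  | refl => exact fun h' => absurd Relation.ReflTransGen.refl h'
  | @tail s y hxs hsy ih =>
      intro hxy
      by_cases hrc : RcA A s y
      · have hxs' : ¬ RcA A x s := fun h' => hxy (Relation.ReflTransGen.trans h' hrc)
        have hBxs := ih hxs'
        rcases hBxs.cases_tail with he | ⟨q', hxq', hq's⟩
        · exact absurd (he ▸ hrc : RcA A x y) hxy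
        · have hq'y : ¬ RcA A q' y := fun h' =>
            hq's.2 (Relation.ReflTransGen.trans h' (RcA_symm hrc))
          have hq'ney : q' ≠ y := fun he => hq's.2 (RcA_symm (he.symm ▸ hrc))
          rcases hadjA q' y hq'ney hq'y with h' | h'
          · exact hxq'.tail ⟨h', hq'y⟩
          · exact (no3' q' s y hq's.1 hsy h').elim
      · exact crossX no2' no3' hxs y ⟨hsy, hrc⟩

/-- the abstract context associated to the digraph -/
def mkCtx (hirr : ∀ v, ¬ A v v) (hstrong : Strong A)
    (h2 : ¬ HasDicycle A 2) (h3 : ¬ HasDicycle A 3) : Aux6.Ctx V where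
  B := BA A
  Rc := RcA A
  no2 := fun a b ha hb => no2A hirr h2 a b ha.1 hb.1
  no3 := fun a b c ha hb hc => no3A hirr h2 h3 a b c ha.1 hb.1 hc.1
  rc_refl := fun _ => Relation.ReflTransGen.refl
  rc_symm := fun _ _ h => RcA_symm h
  rc_trans := fun _ _ _ h1 h2' => Relation.ReflTransGen.trans h1 h2'
  hbr := fun _ _ h => h.2
  hadj := fun a b hne hr => by
    rcases hadjA a b hne hr with h | h
    · exact Or.inl ⟨h, hr⟩
    · exact Or.inr ⟨h, fun h' => hr (RcA_symm h')⟩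
  hstrong := fun a b hr => crossReach (no2A hirr h2) (no3A hirr h2 h3) (hstrong a b) hr

end DigraphSetup


theorem stmt6 {V : Type*} [Fintype V] {n : ℕ} (hn : Fintype.card V = n)
    (hn4 : 4 ≤ n) (A : V → V → Prop)
    (hirr : ∀ v, ¬ A v v) (hstrong : Strong A)
    (h2 : ¬ HasDicycle A 2) (h3 : ¬ HasDicycle A 3)
    (hout : ∀ v, 1 ≤ outDeg A v) (hin : ∀ v, 1 ≤ inDeg A v) :
    arcs A ≤ Nat.choose (n - 1) 2 + 1 := by
  classical
  have no2' := no2A hirr h2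
  have no3' := no3A hirr h2 h3
  set C : Aux6.Ctx V := mkCtx hirr hstrong h2 h3 with hC
  have H3 : ∀ x y z : V, RcA A x y ∨ RcA A y z ∨ RcA A x z := by
    intro x y z
    by_contra hc
    push_neg at hc
    exact C.three_classes x y z hc.1 hc.2.1 hc.2.2
  have hVne : Nonempty V := Fintype.card_pos_iff.mp (by omega)
  obtain ⟨a⟩ := hVne
  have hab : ∃ b : V, b ≠ a ∧ ∀ x : V, RcA A x a ∨ RcA A x b := by
    by_cases hb : ∃ b, ¬ RcA A a b
    · obtain ⟨b, hnb⟩ := hb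
      refine ⟨b, fun he => hnb (by rw [he]; exact Relation.ReflTransGen.refl), ?_⟩
      intro x
      rcases H3 a b x with h | h | h
      · exact absurd h hnb
      · exact Or.inr (RcA_symm h)
      · exact Or.inl (RcA_symm h)
    · push_neg at hb
      obtain ⟨b, hbne⟩ := Fintype.exists_ne_of_one_lt_card (by omega) a
      exact ⟨b, hbne, fun x => Or.inl (RcA_symm (hb x))⟩
  obtain ⟨b, hba, hcov⟩ := hab
  have hexm : ∀ x : V, ∃ m, (fun m => ∃ g : ℕ → V,
      (g 0 = a ∨ g 0 = b) ∧ g m = x ∧ ∀ i < m, NRel A (g i) (g (i + 1))) m := by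
    intro x
    rcases hcov x with h | h
    · obtain ⟨m, g, h0, hm, ha'⟩ := Aux6.rtg_path (RcA_symm h)
      exact ⟨m, g, Or.inl h0, hm, ha'⟩
    · obtain ⟨m, g, h0, hm, ha'⟩ := Aux6.rtg_path (RcA_symm h)
      exact ⟨m, g, Or.inr h0, hm, ha'⟩
  set dd : V → ℕ := fun x => Nat.find (hexm x) with hdd
  have hpar : ∀ x : V, x ≠ a → x ≠ b → ∃ y, NRel A y x ∧ dd y < dd x := by
    intro x hxa hxb
    obtain ⟨g, hg0, hgm, hga'⟩ := Nat.find_spec (hexm x)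
    have hmx : Nat.find (hexm x) = dd x := rfl
    rw [hmx] at hgm hga'
    have hm1 : 1 ≤ dd x := by
      rcases Nat.eq_zero_or_pos (dd x) with h | h
      · exfalso
        rcases hg0 with h0 | h0
        · exact hxa (by rw [← hgm, h, h0])
        · exact hxb (by rw [← hgm, h, h0])
      · exact h
    refine ⟨g (dd x - 1), ?_, ?_⟩
    · have := hga' (dd x - 1) (by omega)
      rwa [show dd x - 1 + 1 = dd x by omega, hgm] at this
    · have hle : dd (g (dd x - 1)) ≤ dd x - 1 :=
        Nat.find_le ⟨g, hg0, rfl, fun i hi => hga' i (by omega)⟩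
      omega
  set par : V → V := fun x =>
    if h : x ≠ a ∧ x ≠ b then Classical.choose (hpar x h.1 h.2) else x with hpardef
  have hparspec : ∀ x : V, x ≠ a → x ≠ b → NRel A (par x) x ∧ dd (par x) < dd x := by
    intro x h1 h2'
    have he : par x = Classical.choose (hpar x h1 h2') := by
      rw [hpardef]
      simp only [dif_pos (And.intro h1 h2')]
    rw [he]
    exact Classical.choose_spec (hpar x h1 h2')
  -- counting
  set T : Finset (V × V) := Finset.univ.offDiag with hT
  set F1 : Finset (V × V) := T.filter (fun p => A p.1 p.2) with hF1
  set F2 : Finset (V × V) := T.filter (fun p => A p.2 p.1) with hF2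
  set F3 : Finset (V × V) := T.filter (fun p => ¬ A p.1 p.2 ∧ ¬ A p.2 p.1) with hF3
  have hmemT : ∀ p : V × V, p ∈ T ↔ p.1 ≠ p.2 := by
    intro p
    simp [hT, Finset.mem_offDiag]
  have hsplit : T.card = F1.card + F2.card + F3.card := by
    have hu : T = (F1 ∪ F2) ∪ F3 := by
      ext p
      simp only [hF1, hF2, hF3, Finset.mem_union, Finset.mem_filter]
      constructor
      · intro hp
        by_cases h1 : A p.1 p.2
        · exact Or.inl (Or.inl ⟨hp, h1⟩)
        · by_cases h2' : A p.2 p.1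
          · exact Or.inl (Or.inr ⟨hp, h2'⟩)
          · exact Or.inr ⟨hp, h1, h2'⟩
      · intro hp
        rcases hp with (⟨hp, _⟩ | ⟨hp, _⟩) | ⟨hp, _⟩ <;> exact hp
    have hd12 : Disjoint F1 F2 := by
      rw [Finset.disjoint_left]
      intro p hp1 hp2
      simp only [hF1, hF2, Finset.mem_filter] at hp1 hp2
      exact no2' _ _ hp1.2 hp2.2
    have hd3 : Disjoint (F1 ∪ F2) F3 := by
      rw [Finset.disjoint_left]
      intro p hp1 hp3
      simp only [hF1, hF2, hF3, Finset.mem_filter, Finset.mem_union] at hp1 hp3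
      rcases hp1 with ⟨_, h⟩ | ⟨_, h⟩
      · exact hp3.2.1 h
      · exact hp3.2.2 h
    rw [hu, Finset.card_union_of_disjoint hd3, Finset.card_union_of_disjoint hd12]
  have hF1card : F1.card = arcs A := by
    have he : F1 = Finset.univ.filter (fun p : V × V => A p.1 p.2) := by
      ext p
      simp only [hF1, Finset.mem_filter, hmemT p, Finset.mem_univ, true_and]
      constructor
      · intro h; exact h.2
      · intro h; exact ⟨fun he' => hirr p.2 (he' ▸ h), h⟩
    rw [he, arcs]
  have hF2card : F2.card = arcs A := by
    have himg : F2 = F1.image Prod.swap := by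
      ext ⟨x, y⟩
      simp only [hF1, hF2, Finset.mem_image, Finset.mem_filter]
      constructor
      · rintro ⟨hT', hA⟩
        rw [hmemT] at hT'
        refine ⟨(y, x), ⟨?_, hA⟩, rfl⟩
        rw [hmemT]
        exact Ne.symm hT'
      · rintro ⟨⟨u, v⟩, ⟨hT', hA⟩, hswap⟩
        obtain ⟨rfl, rfl⟩ : v = x ∧ u = y := by
          simpa [Prod.ext_iff, and_comm] using hswap
        rw [hmemT] at hT'
        exact ⟨by rw [hmemT]; exact Ne.symm hT', hA⟩
    rw [himg, Finset.card_image_of_injective _ Prod.swap_injective, hF1card]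
  set D : Finset V := (Finset.univ.erase a).erase b with hD
  have hDcard : D.card = n - 2 := by
    have h1 : b ∈ Finset.univ.erase a := Finset.mem_erase.mpr ⟨hba, Finset.mem_univ _⟩
    rw [hD, Finset.card_erase_of_mem h1, Finset.card_erase_of_mem (Finset.mem_univ a),
      Finset.card_univ, hn]
    omega
  have hmemD : ∀ x : V, x ∈ D ↔ x ≠ a ∧ x ≠ b := by
    intro x
    simp [hD, Finset.mem_erase, and_comm]
  have hinj : 2 * (n - 2) ≤ F3.card := by
    have hmap : ∀ q ∈ D ×ˢ (Finset.univ : Finset Bool),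
        (if q.2 then (par q.1, q.1) else (q.1, par q.1)) ∈ F3 := by
      rintro ⟨x, s⟩ hq
      rw [Finset.mem_product, hmemD] at hq
      obtain ⟨⟨hxa, hxb⟩, -⟩ := hq
      obtain ⟨⟨hne, hna1, hna2⟩, -⟩ := hparspec x hxa hxb
      rcases s with _ | _
      · simp only [Bool.false_eq_true, if_false, hF3, Finset.mem_filter]
        exact ⟨by rw [hmemT]; exact Ne.symm hne, hna2, hna1⟩
      · simp only [if_true, hF3, Finset.mem_filter]
        exact ⟨by rw [hmemT]; exact hne, hna1, hna2⟩
    have hinjOn : Set.InjOn (fun q : V × Bool => if q.2 then (par q.1, q.1) else (q.1, par q.1))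
        ↑(D ×ˢ (Finset.univ : Finset Bool)) := by
      rintro ⟨x, s⟩ hx ⟨y, s'⟩ hy hxy
      simp only [Finset.coe_product, Set.mem_prod, Finset.mem_coe, hmemD] at hx hy
      obtain ⟨⟨hxa, hxb⟩, -⟩ := hx
      obtain ⟨⟨hya, hyb⟩, -⟩ := hy
      have hddx := (hparspec x hxa hxb).2
      have hddy := (hparspec y hya hyb).2
      rcases s with _ | _ <;> rcases s' with _ | _ <;>
        simp only [Bool.false_eq_true, if_true, if_false, Prod.mk.injEq] at hxy
      · exact congrArg (fun z => (z, false)) hxy.1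
      · exfalso
        obtain ⟨h1, h2'⟩ := hxy
        rw [h2'] at hddx
        rw [← h1] at hddy
        omega
      · exfalso
        obtain ⟨h1, h2'⟩ := hxy
        rw [h1] at hddx
        rw [← h2'] at hddy
        omega
      · exact congrArg (fun z => (z, true)) hxy.2
    have hcard := Finset.card_le_card_of_injOn _ hmap hinjOn
    have hdom : (D ×ˢ (Finset.univ : Finset Bool)).card = (n - 2) * 2 := by
      rw [Finset.card_product, hDcard, Finset.card_univ, Fintype.card_bool]
    omega
  have hTcard : T.card = n * n - n := by
    rw [hT, Finset.offDiag_card, Finset.card_univ, hn]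
  have hchoose2 : 2 * Nat.choose (n - 1) 2 = (n - 1) * (n - 2) := by
    rw [Nat.choose_two_right, show n - 1 - 1 = n - 2 by omega]
    have heven : 2 ∣ (n - 1) * (n - 2) := by
      have hh := Nat.even_mul_succ_self (n - 2)
      rw [show n - 2 + 1 = n - 1 by omega] at hh
      rcases hh with ⟨m, hm⟩
      exact ⟨m, by rw [mul_comm (n - 1) (n - 2), hm]; ring⟩
    exact Nat.mul_div_cancel' heven
  have hid : (n - 1) * (n - 2) + 3 * n = n * n + 2 := by
    obtain ⟨m, rfl⟩ : ∃ m, n = m + 4 := ⟨n - 4, by omega⟩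
    simp only [show m + 4 - 1 = m + 3 by omega, show m + 4 - 2 = m + 2 by omega]
    ring
  have hnn : n ≤ n * n := Nat.le_mul_of_pos_left n (by omega)
  obtain ⟨P, hP⟩ : ∃ P, n * n = P := ⟨_, rfl⟩
  obtain ⟨Q, hQ⟩ : ∃ Q, (n - 1) * (n - 2) = Q := ⟨_, rfl⟩
  rw [hP] at hTcard hid hnn
  rw [hQ] at hchoose2 hid
  omega
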